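/- If a voting system C on a set A of at least three alternatives satisfies unanimity and independence of irrelevant alternatives, then C satisfies neutrality: for every permutation ρ of A and every preference profile (P_1,...,P_n), C(ρ*P_1,...,ρ*P_n) = ρ*C(P_1,...,P_n). -/
import Mathlib


variable {A I : Type*}

/-- A partial preorder: a reflexive and transitive binary relation. -/
def IsPPO (P : A → A → Prop) : Prop := Reflexive P ∧ Transitive P

/-- A linear (total) preorder: reflexive, transitive and complete. -/
def IsLPO (P : A → A → Prop) : Prop := Reflexive P ∧ Transitive P ∧ ∀ a b, P a b ∨ P b a

/-- A profile of partial preorders. -/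
def IsPPOProfile (P : I → A → A → Prop) : Prop := ∀ i, IsPPO (P i)

/-- A profile of linear (total) preorders. -/
def IsLPOProfile (P : I → A → A → Prop) : Prop := ∀ i, IsLPO (P i)

/-- Strict preference. -/
def StrictPref (P : A → A → Prop) (a b : A) : Prop := P a b ∧ ¬ P b a

/-- Indifference. -/
def Indiff (P : A → A → Prop) (a b : A) : Prop := P a b ∧ P b a

/-- The set `A` contains at least three distinct alternatives. -/
def ThreeAlts (A : Type*) : Prop := ∃ a b c : A, a ≠ b ∧ b ≠ c ∧ a ≠ c

/-- Unanimity. -/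
def Unanimity (C : (I → A → A → Prop) → A → A → Prop) : Prop :=
  ∀ P, IsPPOProfile P → ∀ a b : A, (∀ i, P i a b) → C P a b

/-- Independence of irrelevant alternatives. -/
def IIA (C : (I → A → A → Prop) → A → A → Prop) : Prop :=
  ∀ P P' : I → A → A → Prop, IsPPOProfile P → IsPPOProfile P' → ∀ a b : A,
    {i | P i a b} = {i | P' i a b} → {i | P i b a} = {i | P' i b a} →
    (C P a b ↔ C P' a b)

/-- Neutrality: `C (ρ*P) = ρ*(C P)` for every permutation `ρ` of the alternatives. -/
def Neutrality (C : (I → A → A → Prop) → A → A → Prop) : Prop :=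
  ∀ (ρ : Equiv.Perm A) (P : I → A → A → Prop), IsPPOProfile P →
    ∀ x y : A, C (fun i a b => P i (ρ.symm a) (ρ.symm b)) x y ↔ C P (ρ.symm x) (ρ.symm y)

/-- Monotonicity. -/
def Monotonicity (C : (I → A → A → Prop) → A → A → Prop) : Prop :=
  ∀ P P' : I → A → A → Prop, IsPPOProfile P → IsPPOProfile P' → ∀ a b : A,
    {i | P i a b} ⊆ {i | P' i a b} → {i | P' i b a} ⊆ {i | P i b a} →
    C P a b → C P' a b

/-- `J` is a decisive set: unanimous strict preference on `J` forces weak aggregate preference. -/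
def Decisive (C : (I → A → A → Prop) → A → A → Prop) (J : Set I) : Prop :=
  ∀ P, IsPPOProfile P → ∀ a b : A, (∀ j ∈ J, StrictPref (P j) a b) → C P a b

/-- `J` is a strongly decisive set: unanimous weak preference on `J` forces weak aggregate preference. -/
def SDecisive (C : (I → A → A → Prop) → A → A → Prop) (J : Set I) : Prop :=
  ∀ P, IsPPOProfile P → ∀ a b : A, (∀ j ∈ J, P j a b) → C P a b

lemma exists_third (hA : ThreeAlts A) (a b : A) : ∃ e : A, e ≠ a ∧ e ≠ b := by
  classical
  obtain ⟨x, y, z, hxy, hyz, hxz⟩ := hA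
  rcases em (x = a) with rfl | hxa
  · rcases em (y = b) with rfl | hyb
    · exact ⟨z, Ne.symm hxz, Ne.symm hyz⟩
    · exact ⟨y, Ne.symm hxy, hyb⟩
  · rcases em (x = b) with rfl | hxb
    · rcases em (y = a) with rfl | hya
      · exact ⟨z, Ne.symm hyz, Ne.symm hxz⟩
      · exact ⟨y, hya, Ne.symm hxy⟩
    · exact ⟨x, hxa, hxb⟩

/-- A canonical profile realizing the pattern `(S, T)` on the pair `(u, v)`. -/
def patProfile (S T : Set I) (u v : A) : I → A → A → Prop :=
  fun i x y => x = y ∨ (x = u ∧ y = v ∧ i ∈ S) ∨ (x = v ∧ y = u ∧ i ∈ T)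

lemma patProfile_isPPO {S T : Set I} {u v : A} (huv : u ≠ v) :
    IsPPOProfile (patProfile S T u v) := by
  intro i
  constructor
  · intro x; exact Or.inl rfl
  · rintro x y z h1 h2
    rcases h1 with rfl | ⟨rfl, rfl, hs⟩ | ⟨rfl, rfl, ht⟩ <;>
      rcases h2 with rfl | ⟨e1, e2, hs2⟩ | ⟨e1, e2, ht2⟩ <;>
        simp_all [patProfile]

lemma patProfile_pat1 {S T : Set I} {u v : A} (huv : u ≠ v) :
    {i | patProfile S T u v i u v} = S := by
  ext i; simp [patProfile, huv, huv.symm]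

lemma patProfile_pat2 {S T : Set I} {u v : A} (huv : u ≠ v) :
    {i | patProfile S T u v i v u} = T := by
  ext i; simp [patProfile, huv, huv.symm]

/-- Move the second coordinate: `(a,b) → (a,c)`. -/
lemma step2 (C : (I → A → A → Prop) → A → A → Prop)
    (hC : ∀ P, IsPPOProfile P → IsPPO (C P))
    (hU : Unanimity C) (hIIA : IIA C)
    {P P' : I → A → A → Prop} (hP : IsPPOProfile P) (hP' : IsPPOProfile P')
    {a b c : A} (hab : a ≠ b) (hac : a ≠ c) (hbc : b ≠ c)
    (h1 : {i | P i a b} = {i | P' i a c}) (h2 : {i | P i b a} = {i | P' i c a}) :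
    C P a b ↔ C P' a c := by
  classical
  set R : I → A → A → Prop :=
    fun i x y => P i (if x = c then b else x) (if y = c then b else y) with hR
  have hRP : IsPPOProfile R := fun i =>
    ⟨fun x => (hP i).1 _, fun x y z hxy hyz => (hP i).2 hxy hyz⟩
  have e1 : C R a b ↔ C P a b := by
    apply hIIA _ _ hRP hP
    · ext i; simp [hR, hac, hbc]
    · ext i; simp [hR, hac, hbc]
  have ebc : C R b c := hU R hRP b c fun i => by
    simp only [hR, if_pos rfl, if_neg hbc]
    exact (hP i).1 b
  have ecb : C R c b := hU R hRP c b fun i => by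
    simp only [hR, if_pos rfl, if_neg hbc]
    exact (hP i).1 b
  have hRt := (hC R hRP).2
  have e2 : C R a c ↔ C R a b := ⟨fun h => hRt h ecb, fun h => hRt h ebc⟩
  have e3 : C R a c ↔ C P' a c := by
    apply hIIA _ _ hRP hP'
    · have : {i | R i a c} = {i | P i a b} := by ext i; simp [hR, hac]
      rw [this, h1]
    · have : {i | R i c a} = {i | P i b a} := by ext i; simp [hR, hac]
      rw [this, h2]
  exact (e1.symm.trans e2.symm).trans e3

/-- Move the first coordinate: `(a,b) → (c,b)`. -/
lemma step1 (C : (I → A → A → Prop) → A → A → Prop)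
    (hC : ∀ P, IsPPOProfile P → IsPPO (C P))
    (hU : Unanimity C) (hIIA : IIA C)
    {P P' : I → A → A → Prop} (hP : IsPPOProfile P) (hP' : IsPPOProfile P')
    {a b c : A} (hab : a ≠ b) (hcb : c ≠ b) (hac : a ≠ c)
    (h1 : {i | P i a b} = {i | P' i c b}) (h2 : {i | P i b a} = {i | P' i b c}) :
    C P a b ↔ C P' c b := by
  classical
  set R : I → A → A → Prop :=
    fun i x y => P i (if x = c then a else x) (if y = c then a else y) with hR
  have hRP : IsPPOProfile R := fun i =>
    ⟨fun x => (hP i).1 _, fun x y z hxy hyz => (hP i).2 hxy hyz⟩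
  have e1 : C R a b ↔ C P a b := by
    apply hIIA _ _ hRP hP
    · ext i; simp [hR, hac, hcb.symm]
    · ext i; simp [hR, hac, hcb.symm]
  have eca : C R c a := hU R hRP c a fun i => by
    simp only [hR, if_pos rfl, if_neg hac]
    exact (hP i).1 a
  have eac : C R a c := hU R hRP a c fun i => by
    simp only [hR, if_pos rfl, if_neg hac]
    exact (hP i).1 a
  have hRt := (hC R hRP).2
  have e2 : C R c b ↔ C R a b := ⟨fun h => hRt eac h, fun h => hRt eca h⟩
  have e3 : C R c b ↔ C P' c b := by
    apply hIIA _ _ hRP hP'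
    · have : {i | R i c b} = {i | P i a b} := by ext i; simp [hR, hcb.symm]
      rw [this, h1]
    · have : {i | R i b c} = {i | P i b a} := by ext i; simp [hR, hcb.symm]
      rw [this, h2]
  exact (e1.symm.trans e2.symm).trans e3

/-- Pair neutrality: the outcome on a pair only depends on the pattern of votes. -/
lemma pairmove (C : (I → A → A → Prop) → A → A → Prop)
    (hA : ThreeAlts A)
    (hC : ∀ P, IsPPOProfile P → IsPPO (C P))
    (hU : Unanimity C) (hIIA : IIA C)
    {P P' : I → A → A → Prop} (hP : IsPPOProfile P) (hP' : IsPPOProfile P')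
    {a b c d : A} (hab : a ≠ b) (hcd : c ≠ d)
    (h1 : {i | P i a b} = {i | P' i c d}) (h2 : {i | P i b a} = {i | P' i d c}) :
    C P a b ↔ C P' c d := by
  classical
  set S := {i | P i a b} with hS
  set T := {i | P i b a} with hT
  by_cases hbc : b = c
  · subst hbc
    by_cases had : a = d
    · subst had
      -- swap case: (a,b) → (b,a)
      obtain ⟨e, hea, heb⟩ := exists_third hA a b
      have hQ1 := patProfile_isPPO (S := S) (T := T) heb
      have hQ2 := patProfile_isPPO (S := S) (T := T) hea
      have s1 : C P a b ↔ C (patProfile S T e b) e b :=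
        step1 C hC hU hIIA hP hQ1 hab heb hea.symm
          (patProfile_pat1 heb).symm (patProfile_pat2 heb).symm
      have s2 : C (patProfile S T e b) e b ↔ C (patProfile S T e a) e a :=
        step2 C hC hU hIIA hQ1 hQ2 heb hea hab.symm
          (by rw [patProfile_pat1 heb, patProfile_pat1 hea])
          (by rw [patProfile_pat2 heb, patProfile_pat2 hea])
      have s3 : C (patProfile S T e a) e a ↔ C P' b a :=
        step1 C hC hU hIIA hQ2 hP' hea hcd heb
          (by rw [patProfile_pat1 hea]; exact h1)
          (by rw [patProfile_pat2 hea]; exact h2)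
      exact (s1.trans s2).trans s3
    · -- b = c, a ≠ d
      have hbd : b ≠ d := hcd
      have hQ := patProfile_isPPO (S := S) (T := T) (u := a) (v := d) had
      have s1 : C P a b ↔ C (patProfile S T a d) a d :=
        step2 C hC hU hIIA hP hQ hab had hbd
          (patProfile_pat1 had).symm (patProfile_pat2 had).symm
      have s2 : C (patProfile S T a d) a d ↔ C P' b d :=
        step1 C hC hU hIIA hQ hP' had hcd hab
          (by rw [patProfile_pat1 had]; exact h1)
          (by rw [patProfile_pat2 had]; exact h2)
      exact s1.trans s2
  · -- b ≠ c
    by_cases hac : a = c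
    · subst hac
      by_cases hbd : b = d
      · subst hbd; exact hIIA P P' hP hP' a b h1 h2
      · exact step2 C hC hU hIIA hP hP' hab hcd hbd h1 h2
    · have hQ := patProfile_isPPO (S := S) (T := T) (u := c) (v := b)
        (fun h => hbc h.symm)
      have hcb : c ≠ b := fun h => hbc h.symm
      have s1 : C P a b ↔ C (patProfile S T c b) c b :=
        step1 C hC hU hIIA hP hQ hab hcb hac
          (patProfile_pat1 hcb).symm (patProfile_pat2 hcb).symm
      by_cases hbd : b = d
      · subst hbd
        have s2 : C (patProfile S T c b) c b ↔ C P' c b :=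
          hIIA _ P' hQ hP' c b
            (by rw [patProfile_pat1 hcb]; exact h1)
            (by rw [patProfile_pat2 hcb]; exact h2)
        exact s1.trans s2
      · have s2 : C (patProfile S T c b) c b ↔ C P' c d :=
          step2 C hC hU hIIA hQ hP' hcb hcd hbd
            (by rw [patProfile_pat1 hcb]; exact h1)
            (by rw [patProfile_pat2 hcb]; exact h2)
        exact s1.trans s2

theorem arrovian_neutrality (C : (I → A → A → Prop) → A → A → Prop)
    (hA : ThreeAlts A)
    (hC : ∀ P, IsPPOProfile P → IsPPO (C P))
    (hU : Unanimity C) (hIIA : IIA C) :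
    Neutrality C := by
  intro ρ P hP x y
  classical
  have hQ : IsPPOProfile (fun i u v => P i (ρ.symm u) (ρ.symm v)) :=
    fun i => ⟨fun u => (hP i).1 _, fun u v w h1 h2 => (hP i).2 h1 h2⟩
  by_cases hxy : x = y
  · subst hxy
    constructor <;> intro _
    · exact (hC P hP).1 _
    · exact (hC _ hQ).1 _
  · have hab : ρ.symm x ≠ ρ.symm y := fun h => hxy (ρ.symm.injective h)
    exact pairmove C hA hC hU hIIA hQ hP hxy hab rfl rfl
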